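/- Let G be a topological group acting continuously and properly on a locally compact Hausdorff space M. Then any two distinct orbits can be separated by a continuous invariant function: if G·z ∩ G·z' = ∅, there exists a continuous G-invariant function f : M → ℝ with f(z) ≠ f(z'). -/

import Mathlib

theorem proper_action_orbits_separated_by_invariant_functions
    {G M : Type*} [Group G] [TopologicalSpace G] [IsTopologicalGroup G]
    [TopologicalSpace M] [LocallyCompactSpace M] [T2Space M]
    [MulAction G M] [ContinuousSMul G M]
    (hproper : IsProperMap (fun p : G × M => (p.1 • p.2, p.2)))
    (z z' : M) (hdisj : Disjoint (MulAction.orbit G z) (MulAction.orbit G z')) :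
    ∃ f : M → ℝ, Continuous f ∧ (∀ (g : G) (x : M), f (g • x) = f x) ∧
      f z ≠ f z' := by
  have hps : ProperSMul G M := ⟨hproper⟩
  let Q := Quotient (MulAction.orbitRel G M)
  let π : M → Q := Quotient.mk _
  have hoq : IsOpenQuotientMap π := MulAction.isOpenQuotientMap_quotientMk
  have : T2Space Q := t2Space_quotient_mulAction_of_properSMul
  have : LocallyCompactSpace Q := hoq.locallyCompactSpace
  have hzz : π z ≠ π z' := by
    intro h
    have : z ∈ MulAction.orbit G z' := Quotient.exact h
    exact (hdisj.le_bot ⟨MulAction.mem_orbit_self z, this⟩ : (z : M) ∈ (⊥ : Set M)).elim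
  obtain ⟨f, hf0, hf1, _⟩ := exists_continuous_zero_one_of_isCompact
    (isCompact_singleton (x := π z)) (isClosed_singleton (x := π z'))
    (Set.disjoint_singleton.2 hzz)
  refine ⟨f ∘ π, f.continuous.comp hoq.continuous, fun g x => ?_, ?_⟩
  · simp only [Function.comp_apply]
    congr 1
    exact Quotient.sound (MulAction.mem_orbit x g)
  · simp only [Function.comp_apply]
    rw [hf0 rfl, hf1 rfl]
    simp
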